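/- Let G be an abelian group. Then every generalized polynomial f : G → ℂ is a local polynomial, i.e. the restriction of f to every finitely generated subgroup of G is a polynomial. -/

import Mathlib

/-- The difference operator: `(Δ_y f)(x) = f(x+y) - f(x)`. -/
def diffOp {G : Type*} [AddCommGroup G] (y : G) (f : G → ℂ) : G → ℂ :=
  fun x => f (x + y) - f x

/-- `f` is a generalized polynomial: some iterated difference of order `n+1` always vanishes. -/
def IsGenPoly {G : Type*} [AddCommGroup G] (f : G → ℂ) : Prop :=
  ∃ n : ℕ, ∀ ys : List G, ys.length = n + 1 → ys.foldr diffOp f = 0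

/-- An additive function is a homomorphism of `G` into `(ℂ, +)`. -/
def IsAdditiveFn {G : Type*} [AddCommGroup G] (a : G → ℂ) : Prop :=
  ∀ x y : G, a (x + y) = a x + a y

/-- `f` is a polynomial: it belongs to the complex function algebra generated by the
additive functions (constants lie in every subalgebra). -/
def IsPolyFn {G : Type*} [AddCommGroup G] (f : G → ℂ) : Prop :=
  f ∈ Algebra.adjoin ℂ {a : G → ℂ | IsAdditiveFn a}

/-- The variety `τ(f)`: smallest translation-invariant linear subspace of `ℂ^G`
containing `f` which is closed under pointwise convergence. -/
noncomputable def variety {G : Type*} [AddCommGroup G] (f : G → ℂ) :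
    Submodule ℂ (G → ℂ) :=
  (Submodule.span ℂ {g : G → ℂ | ∃ y : G, g = fun x => f (x + y)}).topologicalClosure

namespace GenPolyAux
variable {G : Type*} [AddCommGroup G]

lemma diffOp_zero (y : G) : diffOp y (0 : G → ℂ) = 0 := by
  funext x; simp [diffOp]

lemma foldr_append (f : G → ℂ) (ys zs : List G) :
    (ys ++ zs).foldr diffOp f = ys.foldr diffOp (zs.foldr diffOp f) :=
  List.foldr_append

lemma vanish_of_ge {n : ℕ} {f : G → ℂ}
    (h : ∀ ys : List G, ys.length = n + 1 → ys.foldr diffOp f = 0) :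
    ∀ ws : List G, n + 1 ≤ ws.length → ws.foldr diffOp f = 0 := by
  intro ws
  induction ws with
  | nil => intro h0; simp at h0
  | cons w ws ih =>
    intro hl
    rcases eq_or_lt_of_le hl with he | hlt
    · exact h _ he.symm
    · have : n + 1 ≤ ws.length := by simpa [Nat.lt_succ_iff] using hlt
      rw [List.foldr_cons, ih this, diffOp_zero]

/-- the generalized binomial coefficient as a complex number -/
noncomputable def bin (t : ℤ) (j : ℕ) : ℂ :=
  (∏ i ∈ Finset.range j, ((t : ℂ) - i)) / (j.factorial : ℂ)

lemma bin_def (t : ℤ) (j : ℕ) :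
    bin t j = (∏ i ∈ Finset.range j, ((t : ℂ) - i)) / (j.factorial : ℂ) := rfl

lemma bin_zero_right (t : ℤ) : bin t 0 = 1 := by simp [bin]

lemma bin_zero_left (j : ℕ) : bin 0 (j + 1) = 0 := by
  have : (0 : ℂ) ∈ (fun i : ℕ => ((0 : ℤ) : ℂ) - i) '' (Finset.range (j+1)) := by
    exact ⟨0, by simp⟩
  simp only [bin]
  rw [Finset.prod_eq_zero (Finset.mem_range.mpr (Nat.succ_pos j))]
  · simp
  · simp

lemma bin_succ_sub (t : ℤ) (j : ℕ) : bin (t + 1) (j + 1) - bin t (j + 1) = bin t j := by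
  have h0 : ∏ i ∈ Finset.range (j + 1), (((t + 1 : ℤ) : ℂ) - i)
      = (∏ i ∈ Finset.range j, ((t : ℂ) - i)) * ((t : ℂ) + 1) := by
    rw [Finset.prod_range_succ']
    push_cast
    congr 1
    · exact Finset.prod_congr rfl fun i _ => by push_cast; ring
    · ring
  have h1 : ∏ i ∈ Finset.range (j + 1), ((t : ℂ) - i)
      = (∏ i ∈ Finset.range j, ((t : ℂ) - i)) * ((t : ℂ) - j) := Finset.prod_range_succ _ _
  have hfac : ((j + 1).factorial : ℂ) = (j + 1) * (j.factorial : ℂ) := by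
    rw [Nat.factorial_succ]; push_cast; ring
  have hne : ((j : ℂ) + 1) ≠ 0 := by
    have : ((j + 1 : ℕ) : ℂ) ≠ 0 := Nat.cast_ne_zero.mpr (Nat.succ_ne_zero j)
    simpa using this
  have hfne : (j.factorial : ℂ) ≠ 0 := by
    exact_mod_cast j.factorial_ne_zero
  rw [bin_def, bin_def, bin_def, h0, h1, hfac]
  field_simp
  ring

lemma newton : ∀ (n : ℕ) (f : G → ℂ),
    (∀ ys : List G, ys.length = n + 1 → ys.foldr diffOp f = 0) →
    ∀ (x y : G) (t : ℤ), f (x + t • y) =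
      ∑ j ∈ Finset.range (n + 1), ((List.replicate j y).foldr diffOp f) x * bin t j := by
  intro n
  induction n with
  | zero =>
    intro f h x y t
    have hconst : ∀ z w : G, f (z + w) = f z := by
      intro z w
      have := congrFun (h [w] rfl) z
      simp only [List.foldr_cons, List.foldr_nil, diffOp, Pi.zero_apply] at this
      exact sub_eq_zero.mp this
    have h1 : f (x + t • y) = f x := hconst x (t • y)
    simp [h1, bin_zero_right]
  | succ n ih =>
    intro f h x y t
    set g := diffOp y f with hg
    have hgv : ∀ ys : List G, ys.length = n + 1 → ys.foldr diffOp g = 0 := by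
      intro ys hl
      have : (ys ++ [y]).foldr diffOp f = 0 := h _ (by simp [hl])
      rwa [foldr_append] at this
    have hrep : ∀ j : ℕ, (List.replicate j y).foldr diffOp g
        = (List.replicate (j + 1) y).foldr diffOp f := by
      intro j
      rw [List.replicate_succ' , foldr_append]
      rfl
    set d : ℕ → ℂ := fun j => ((List.replicate j y).foldr diffOp f) x with hd
    set N : ℤ → ℂ := fun t => ∑ j ∈ Finset.range (n + 2), d j * bin t j with hN
    have hdiff : ∀ s : ℤ, N (s + 1) - N s
        = ∑ j ∈ Finset.range (n + 1), d (j + 1) * bin s j := by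
      intro s
      rw [hN]
      simp only
      rw [← Finset.sum_sub_distrib]
      have : ∀ j ∈ Finset.range (n + 2),
          d j * bin (s+1) j - d j * bin s j = d j * (bin (s+1) j - bin s j) := by
        intro j _; ring
      rw [Finset.sum_congr rfl this, Finset.sum_range_succ']
      simp only [bin_succ_sub, bin_zero_right, sub_self, mul_zero, add_zero]
    have hstep : ∀ s : ℤ, f (x + (s + 1) • y) - f (x + s • y) = N (s + 1) - N s := by
      intro s
      have h1 : x + (s + 1) • y = (x + s • y) + y := by
        rw [add_smul, one_smul]; abel
      have h2 : f (x + (s+1) • y) - f (x + s • y) = g (x + s • y) := by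
        rw [h1]; rfl
      rw [h2, hdiff, ih g hgv x y s]
      apply Finset.sum_congr rfl
      intro j _
      rw [hrep j]
    have hzero : f (x + (0:ℤ) • y) = N 0 := by
      rw [hN]
      simp only
      rw [Finset.sum_range_succ']
      simp only [bin_zero_left, mul_zero, Finset.sum_const_zero, zero_add, bin_zero_right,
        mul_one, zero_smul, add_zero]
      rfl
    have key : ∀ s : ℤ, f (x + s • y) = N s := by
      intro s
      induction s using Int.induction_on with
      | zero => exact hzero
      | succ k hk =>
        have hs := hstep k
        linear_combination hs + hk
      | pred k hk =>
        have hs := hstep (-(k : ℤ) - 1)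
        have h2 : (-(k : ℤ) - 1 + 1) = -(k : ℤ) := by ring
        rw [h2] at hs
        linear_combination hk - hs
    exact key t

/-- forward difference on integer sequences -/
def dZ (u : ℤ → ℂ) : ℤ → ℂ := fun t => u (t + 1) - u t

lemma zconst0 (u : ℤ → ℂ) (h : ∀ t : ℤ, u (t + 1) = u t) : ∀ t, u t = u 0 := by
  intro t
  induction t using Int.induction_on with
  | zero => rfl
  | succ k hk => rw [h k, hk]
  | pred k hk => rw [← hk, ← h (-(k:ℤ) - 1)]; norm_num

lemma zlin (u : ℤ → ℂ) (c : ℂ) (h : ∀ t : ℤ, u (t + 1) = u t + c) :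
    ∀ t : ℤ, u t = u 0 + t * c := by
  intro t
  induction t using Int.induction_on with
  | zero => simp
  | succ k hk => rw [h k, hk]; push_cast; ring
  | pred k hk =>
    have := h (-(k : ℤ) - 1)
    have h2 : (-(k : ℤ) - 1 + 1) = -(k : ℤ) := by ring
    rw [h2] at this
    rw [hk] at this
    push_cast at this ⊢
    linear_combination -this

lemma zconst : ∀ (n : ℕ) (u : ℤ → ℂ) (m : ℕ), 0 < m → (∀ t : ℤ, u (t + m) = u t) →
    dZ^[n + 1] u = 0 → ∀ t, u t = u 0 := by
  intro n
  induction n with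
  | zero =>
    intro u m _ _ hd
    apply zconst0
    intro t
    have := congrFun hd t
    simp only [Function.iterate_one, dZ, Pi.zero_apply] at this
    exact sub_eq_zero.mp this
  | succ n ih =>
    intro u m hm hper hd
    set v := dZ u with hv
    have hdv : dZ^[n + 1] v = 0 := by
      rw [hv, ← Function.iterate_succ_apply]
      exact hd
    have hperv : ∀ t : ℤ, v (t + m) = v t := by
      intro t
      simp only [hv, dZ]
      rw [show (t + (m:ℤ) + 1) = (t + 1) + m by ring, hper, hper]
    have hvconst := ih v m hm hperv hdv
    set c := v 0 with hc
    have hu : ∀ t : ℤ, u (t + 1) = u t + c := by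
      intro t
      have := hvconst t
      simp only [hv, dZ] at this
      linear_combination this
    have hlin := zlin u c hu
    have h0 : u (0 + (m : ℤ)) = u 0 := hper 0
    rw [zero_add, hlin m] at h0
    have hcz : c = 0 := by
      have hmne : ((m : ℤ) : ℂ) ≠ 0 := by exact_mod_cast hm.ne'
      have hmc : ((m : ℤ) : ℂ) * c = 0 := by linear_combination h0
      exact (mul_eq_zero.mp hmc).resolve_left hmne
    intro t
    rw [hlin t, hcz]
    simp

lemma dZ_iter (x y : G) : ∀ (k : ℕ) (f : G → ℂ),
    dZ^[k] (fun t : ℤ => f (x + t • y)) = fun t => ((List.replicate k y).foldr diffOp f) (x + t • y) := by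
  intro k
  induction k with
  | zero => intro f; simp
  | succ k ih =>
    intro f
    have h1 : dZ (fun t : ℤ => f (x + t • y)) = fun t : ℤ => (diffOp y f) (x + t • y) := by
      funext t
      simp only [dZ, diffOp]
      congr 2
      rw [add_smul, one_smul]; abel
    rw [Function.iterate_succ_apply, h1, ih (diffOp y f)]
    funext t
    congr 1
    rw [List.replicate_succ', foldr_append]
    rfl

lemma torsion_invariant (n : ℕ) (f : G → ℂ)
    (hf : ∀ ys : List G, ys.length = n + 1 → ys.foldr diffOp f = 0)
    (x y : G) (m : ℕ) (hm : 0 < m) (hy : m • y = 0) : f (x + y) = f x := by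
  set u : ℤ → ℂ := fun t => f (x + t • y) with hu
  have hper : ∀ t : ℤ, u (t + m) = u t := by
    intro t
    simp only [hu]
    congr 1
    rw [add_smul]
    have : ((m : ℤ)) • y = 0 := by rw [natCast_zsmul, hy]
    rw [this, add_zero]
  have hd : dZ^[n + 1] u = 0 := by
    rw [hu, dZ_iter x y (n + 1) f]
    funext t
    rw [hf (List.replicate (n+1) y) List.length_replicate]
    rfl
  have := zconst n u m hm hper hd 1
  simpa [hu] using this

lemma mnewton (n : ℕ) : ∀ (r : ℕ) (f : G → ℂ),
    (∀ ys : List G, ys.length = n + 1 → ys.foldr diffOp f = 0) →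
    ∀ (e : Fin r → G), ∃ c : (Fin r → Fin (n + 1)) → ℂ,
      ∀ t : Fin r → ℤ, f (∑ i, t i • e i) =
        ∑ j : Fin r → Fin (n + 1), c j * ∏ i, bin (t i) (j i) := by
  intro r
  induction r with
  | zero =>
    intro f _ e
    refine ⟨fun _ => f 0, fun t => ?_⟩
    have h1 : (∑ i : Fin 0, t i • e i) = 0 := by simp
    rw [h1, Fintype.sum_unique
      (fun j : Fin 0 → Fin (n + 1) => f 0 * ∏ i, bin (t i) (j i))]
    simp
  | succ r ih =>
    intro f hf e
    have hg : ∀ j₀ : ℕ, ∀ ys : List G, ys.length = n + 1 →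
        ys.foldr diffOp ((List.replicate j₀ (e 0)).foldr diffOp f) = 0 := by
      intro j₀ ys hl
      rw [← foldr_append]
      exact vanish_of_ge hf _ (by simp [hl])
    have hIH := fun j₀ : ℕ => ih ((List.replicate j₀ (e 0)).foldr diffOp f) (hg j₀)
        (fun i => e i.succ)
    choose c' hc' using hIH
    refine ⟨fun j => c' (j 0) (fun i => j i.succ), fun t => ?_⟩
    have hsplit : (∑ i, t i • e i) = (∑ i : Fin r, t i.succ • e i.succ) + t 0 • e 0 := by
      rw [Fin.sum_univ_succ]; abel
    rw [hsplit, newton n f hf _ (e 0) (t 0)]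
    have hterm : ∀ j₀ ∈ Finset.range (n + 1),
        ((List.replicate j₀ (e 0)).foldr diffOp f) (∑ i : Fin r, t i.succ • e i.succ) * bin (t 0) j₀
        = ∑ j' : Fin r → Fin (n + 1), c' j₀ j' * (∏ i, bin (t i.succ) ((j' i : ℕ))) * bin (t 0) j₀ := by
      intro j₀ _
      rw [hc' j₀ (fun i => t i.succ), Finset.sum_mul]
    rw [Finset.sum_congr rfl hterm, ← Fin.sum_univ_eq_sum_range (fun j₀ =>
      ∑ j' : Fin r → Fin (n + 1), c' j₀ j' * (∏ i, bin (t i.succ) ((j' i : ℕ))) * bin (t 0) j₀)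
      (n + 1)]
    have hsum : ∀ F : (Fin (r + 1) → Fin (n + 1)) → ℂ,
        ∑ j, F j = ∑ j₀ : Fin (n + 1), ∑ j' : Fin r → Fin (n + 1), F (Fin.cons j₀ j') := by
      intro F
      rw [← Equiv.sum_comp (Fin.consEquiv (fun _ : Fin (r + 1) => Fin (n + 1))) F]
      exact Fintype.sum_prod_type
        (f := fun p : Fin (n + 1) × (Fin r → Fin (n + 1)) => F (Fin.cons p.1 p.2))
    conv_rhs => rw [hsum]
    apply Finset.sum_congr rfl; intro j₀ _
    apply Finset.sum_congr rfl; intro j' _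
    simp only [Fin.cons_zero, Fin.cons_succ]
    rw [Fin.prod_univ_succ]
    simp only [Fin.cons_zero, Fin.cons_succ]
    ring

end GenPolyAux

open GenPolyAux in
theorem genPoly_isLocalPoly'
    {G : Type*} [AddCommGroup G] (f : G → ℂ)
    (hf : ∃ n : ℕ, ∀ ys : List G, ys.length = n + 1 → ys.foldr diffOp f = 0) :
    ∀ H : AddSubgroup G, H.FG →
      (fun x : H => f x) ∈ Algebra.adjoin ℂ {a : H → ℂ | ∀ x y : ↥H, a (x + y) = a x + a y} := by
  obtain ⟨n, hf⟩ := hf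
  intro H hH
  haveI hFG : AddGroup.FG H := (AddGroup.fg_iff_addSubgroup_fg H).mpr hH
  obtain ⟨r, ι, hι, p, hp, ex, ⟨E⟩⟩ := AddCommGroup.equiv_free_prod_directSum_zmod ↥H
  haveI : Fintype ι := hι
  haveI : ∀ i, NeZero (p i ^ ex i) := fun i => ⟨pow_ne_zero _ (hp i).pos.ne'⟩
  set T := DirectSum ι (fun i => ZMod (p i ^ ex i)) with hT
  haveI : Finite T := Finite.of_equiv (∀ i, ZMod (p i ^ ex i)) DFinsupp.equivFunOnFintype.symm
  set m : ℕ := Nat.card T with hmdef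
  have hm : 0 < m := Nat.card_pos
  -- the additive coordinate functions
  set a : Fin r → (↥H → ℂ) := fun i x => (((E x).1 i : ℤ) : ℂ) with hadef
  have ha : ∀ i, ∀ x y : ↥H, a i (x + y) = a i x + a i y := by
    intro i x y
    simp only [hadef, map_add, Prod.fst_add, Finsupp.add_apply, Int.cast_add]
  set cfin : Fin r → ↥H := fun i => E.symm (Finsupp.single i 1, 0) with hcdef
  -- decomposition of an element
  have hdecomp : ∀ x : ↥H,
      x = (∑ i, (E x).1 i • cfin i) + E.symm (0, (E x).2) := by
    intro x
    have hfst : (E x).1 = ∑ i, (E x).1 i • Finsupp.single i (1 : ℤ) := by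
      apply Finsupp.ext; intro k
      rw [Finsupp.finset_sum_apply]
      simp [Finsupp.single_apply, Finsupp.smul_apply]
    have h1 : ((E x).1, (0 : T))
        = ∑ i, (E x).1 i • ((Finsupp.single i (1 : ℤ) : Fin r →₀ ℤ), (0 : T)) := by
      apply Prod.ext
      · rw [Prod.fst_sum]
        exact hfst
      · rw [Prod.snd_sum]
        simp
    have h2 : E.symm ((E x).1, (0 : T)) = ∑ i, (E x).1 i • cfin i := by
      rw [h1, map_sum]
      exact Finset.sum_congr rfl fun i _ => map_zsmul E.symm _ _
    calc x = E.symm (E x) := (E.symm_apply_apply x).symm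
      _ = E.symm (((E x).1, (0 : T)) + ((0 : Fin r →₀ ℤ), (E x).2)) := by
          congr 1
          ext <;> simp
      _ = E.symm ((E x).1, (0 : T)) + E.symm ((0 : Fin r →₀ ℤ), (E x).2) := map_add _ _ _
      _ = (∑ i, (E x).1 i • cfin i) + E.symm (0, (E x).2) := by rw [h2]
  -- torsion elements die
  have htor : ∀ s : T, m • (E.symm ((0 : Fin r →₀ ℤ), s)) = 0 := by
    intro s
    have h1 : m • ((0 : Fin r →₀ ℤ), s) = ((0 : Fin r →₀ ℤ), m • s) := by
      have : m • ((0 : Fin r →₀ ℤ), s) = (m • (0 : Fin r →₀ ℤ), m • s) := rfl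
      rw [this, smul_zero]
    rw [← map_nsmul, h1, card_nsmul_eq_zero']
    simp
  -- the multivariate Newton expansion
  obtain ⟨cc, hcc⟩ := GenPolyAux.mnewton n r f hf (fun i => ((cfin i : G)))
  have hval : ∀ x : ↥H, f ↑x
      = ∑ j : Fin r → Fin (n + 1), cc j * ∏ i, GenPolyAux.bin ((E x).1 i) (j i) := by
    intro x
    set u := (E x).1 with hu
    set τ : ↥H := E.symm ((0 : Fin r →₀ ℤ), (E x).2) with hτ
    have h2 : (x : G) = (↑(∑ i, u i • cfin i) : G) + ↑τ := by
      rw [← AddSubgroup.coe_add, ← hdecomp x]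
    have hτG : m • (τ : G) = 0 := by
      have h := htor (E x).2
      rw [← hτ] at h
      calc m • (τ : G) = ((m • τ : ↥H) : G) := rfl
        _ = ((0 : ↥H) : G) := by rw [h]
        _ = 0 := rfl
    have h3 : ((∑ i, u i • cfin i : ↥H) : G) = ∑ i, u i • ((cfin i : G)) := by
      rw [show ((∑ i, u i • cfin i : ↥H) : G) = H.subtype (∑ i, u i • cfin i) from rfl,
        map_sum]
      exact Finset.sum_congr rfl fun i _ => map_zsmul H.subtype _ _
    rw [h2, GenPolyAux.torsion_invariant n f hf _ _ m hm hτG, h3, hcc u]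
  -- membership in the adjoined algebra
  have hF : (fun x : ↥H => f ↑x)
      = ∑ j : Fin r → Fin (n + 1), cc j •
          ∏ i, (((j i : ℕ).factorial : ℂ)⁻¹ •
            ∏ l ∈ Finset.range (j i : ℕ), (a i - fun _ => (l : ℂ))) := by
    funext x
    rw [hval x]
    rw [Finset.sum_apply]
    apply Finset.sum_congr rfl
    intro j _
    rw [Pi.smul_apply, Finset.prod_apply, smul_eq_mul]
    congr 1
    apply Finset.prod_congr rfl
    intro i _
    rw [Pi.smul_apply, Finset.prod_apply, GenPolyAux.bin_def, smul_eq_mul]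
    rw [div_eq_inv_mul]
    rfl
  rw [hF]
  apply Subalgebra.sum_mem
  intro j _
  apply Subalgebra.smul_mem
  apply Subalgebra.prod_mem
  intro i _
  apply Subalgebra.smul_mem
  apply Subalgebra.prod_mem
  intro l _
  apply Subalgebra.sub_mem
  · exact Algebra.subset_adjoin (ha i)
  · exact Subalgebra.algebraMap_mem _ ((l : ℂ))


/-- Every generalized polynomial is a local polynomial: its restriction to every
finitely generated subgroup is a polynomial. -/
theorem genPoly_isLocalPoly
    {G : Type*} [AddCommGroup G] (f : G → ℂ) (hf : IsGenPoly f) :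
    ∀ H : AddSubgroup G, H.FG → IsPolyFn (fun x : H => f x) := by
  intro H hH
  exact genPoly_isLocalPoly' f hf H hH
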